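/- Let (R, m) be a commutative noetherian local ring and p a prime ideal of R. Then p is a good ideal, i.e. γ_p(R) = p, if and only if the localization R_p is NOT a discrete valuation ring. -/

import Mathlib

open IsLocalRing


/-- A noetherian local ring whose maximal ideal is generated by a regular element is a DVR
(stated as: domain, PIR, not a field). -/
private lemma aux_dvr {A : Type*} [CommRing A] [IsNoetherianRing A] [IsLocalRing A]
    (α : A) (hgen : maximalIdeal A = Ideal.span {α})
    (hreg : ∀ z : A, α * z = 0 → z = 0) :
    IsDomain A ∧ IsPrincipalIdealRing A ∧ ¬ IsField A := by
  have hα0 : α ≠ 0 := fun h => one_ne_zero (hreg 1 (by simp [h]))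
  have hne_top : maximalIdeal A ≠ ⊤ := (maximalIdeal.isMaximal A).ne_top
  have pow_ne : ∀ n : ℕ, α ^ n ≠ 0 := by
    intro n
    induction n with
    | zero => simp
    | succ k ih => rw [pow_succ']; exact fun h => ih (hreg _ h)
  have key : ∀ x : A, x ≠ 0 → ∃ (c : A) (n : ℕ), IsUnit c ∧ x = c * α ^ n := by
    intro x hx
    classical
    have hex : ∃ n : ℕ, x ∉ maximalIdeal A ^ (n + 1) := by
      by_contra h
      push_neg at h
      apply hx
      have : x ∈ ⨅ i : ℕ, maximalIdeal A ^ i := by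
        rw [Ideal.mem_iInf]
        intro i
        cases i with
        | zero => simp
        | succ k => exact h k
      rwa [Ideal.iInf_pow_eq_bot_of_isLocalRing _ hne_top, Ideal.mem_bot] at this
    set n := Nat.find hex with hn
    have hn1 : x ∉ maximalIdeal A ^ (n + 1) := Nat.find_spec hex
    have hn0 : x ∈ maximalIdeal A ^ n := by
      cases h : n with
      | zero => simp
      | succ k =>
        have := Nat.find_min hex (by omega : k < n)
        simpa [h] using not_not.mp this
    rw [hgen, Ideal.span_singleton_pow, Ideal.mem_span_singleton'] at hn0
    obtain ⟨c, hc⟩ := hn0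
    refine ⟨c, n, ?_, hc.symm⟩
    by_contra hcu
    have hcm : c ∈ maximalIdeal A := hcu
    rw [hgen, Ideal.mem_span_singleton'] at hcm
    obtain ⟨d, hd⟩ := hcm
    apply hn1
    rw [hgen, Ideal.span_singleton_pow, Ideal.mem_span_singleton']
    exact ⟨d, by rw [← hc, ← hd, pow_succ']; ring⟩
  have hnzd : NoZeroDivisors A := by
    constructor
    intro x y hxy
    by_contra h
    push_neg at h
    obtain ⟨hx, hy⟩ := h
    obtain ⟨c, n, hcu, rfl⟩ := key x hx
    obtain ⟨d, m, hdu, rfl⟩ := key y hy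
    have : (c * d) * α ^ (n + m) = 0 := by rw [← hxy]; ring
    exact pow_ne (n + m) (((hcu.mul hdu).mul_right_eq_zero).mp this)
  haveI : IsDomain A := NoZeroDivisors.to_isDomain A
  refine ⟨inferInstance, ?_, ?_⟩
  · constructor
    intro I
    by_cases hI : I = ⊥
    · exact ⟨⟨0, by rw [hI]; exact (Submodule.span_zero_singleton A).symm⟩⟩
    · obtain ⟨n, hn⟩ := exists_maximalIdeal_pow_eq_of_principal A ⟨⟨α, hgen⟩⟩ I hI
      exact ⟨⟨α ^ n, by rw [hn, hgen, Ideal.span_singleton_pow]⟩⟩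
  · intro hf
    rw [isField_iff_maximalIdeal_eq] at hf
    apply hα0
    have : α ∈ maximalIdeal A := by rw [hgen]; exact Ideal.mem_span_singleton_self α
    rwa [hf, Ideal.mem_bot] at this

lemma dvr_of_hom {R : Type u} [CommRing R] [IsNoetherianRing R] [IsLocalRing R]
    (p : Ideal R) [p.IsPrime] (f : p →ₗ[R] R) (x : p) (hfx : f x ∉ p) :
    IsDomain (Localization.AtPrime p) ∧ IsPrincipalIdealRing (Localization.AtPrime p) ∧
      ¬ IsField (Localization.AtPrime p) := by
  haveI : IsNoetherianRing (Localization.AtPrime p) :=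
    IsLocalization.isNoetherianRing p.primeCompl _ ‹_›
  let Rp := Localization.AtPrime p
  let ℓ : p →ₗ[R] (p.map (algebraMap R Rp)) := Algebra.idealMap Rp p
  let F : ↥(p.map (algebraMap R Rp)) →ₗ[Rp] Rp :=
    IsLocalizedModule.mapExtendScalars p.primeCompl ℓ (Algebra.linearMap R Rp) Rp f
  have hFx : F (ℓ x) = algebraMap R Rp (f x) := by
    simp [F, ℓ, IsLocalizedModule.mapExtendScalars]
  have hu : IsUnit (algebraMap R Rp (f x)) :=
    (IsLocalization.AtPrime.isUnit_to_map_iff Rp p (f x)).mpr hfx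
  -- an element a with F a = 1
  obtain ⟨a, hFa⟩ : ∃ a : ↥(p.map (algebraMap R Rp)), F a = 1 :=
    ⟨(↑hu.unit⁻¹ : Rp) • ℓ x, by rw [map_smul, hFx, smul_eq_mul, IsUnit.val_inv_mul]⟩
  have key : ∀ k : ↥(p.map (algebraMap R Rp)), (k : Rp) = (a : Rp) * F k := by
    intro k
    have h1 : ((k : Rp) • a) = ((a : Rp) • k) :=
      Subtype.ext (by simp [smul_eq_mul, mul_comm])
    calc (k : Rp) = (k : Rp) * F a := by rw [hFa, mul_one]
    _ = F ((k : Rp) • a) := by rw [map_smul, smul_eq_mul]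
    _ = F ((a : Rp) • k) := by rw [h1]
    _ = (a : Rp) * F k := by rw [map_smul, smul_eq_mul]
  have hgen : maximalIdeal Rp = Ideal.span {(a : Rp)} := by
    rw [← Localization.AtPrime.map_eq_maximalIdeal]
    apply le_antisymm
    · intro k hk
      rw [Ideal.mem_span_singleton']
      exact ⟨F ⟨k, hk⟩, (mul_comm _ _).trans (key ⟨k, hk⟩).symm⟩
    · rw [Ideal.span_le, Set.singleton_subset_iff]
      exact a.2
  have hreg : ∀ z : Rp, (a : Rp) * z = 0 → z = 0 := by
    intro z hz
    have h0 : (z • a : ↥(p.map (algebraMap R Rp))) = 0 :=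
      Subtype.ext (by simpa [smul_eq_mul, mul_comm] using hz)
    have : z = F (z • a) := by rw [map_smul, hFa, smul_eq_mul, mul_one]
    rw [h0, map_zero] at this
    exact this
  exact aux_dvr _ hgen hreg


lemma exists_hom_of_dvr {R : Type u} [CommRing R] [IsNoetherianRing R] [IsLocalRing R]
    (p : Ideal R) [p.IsPrime]
    (hdom : IsDomain (Localization.AtPrime p))
    (hpir : IsPrincipalIdealRing (Localization.AtPrime p))
    (hnf : ¬ IsField (Localization.AtPrime p)) :
    ∃ (f : p →ₗ[R] R) (x : p), f x ∉ p := by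
  let Rp := Localization.AtPrime p
  haveI : IsNoetherianRing Rp := IsLocalization.isNoetherianRing p.primeCompl _ ‹_›
  haveI : Module.Finite R p := Module.Finite.iff_fg.mpr (IsNoetherian.noetherian p)
  haveI : Module.FinitePresentation R p := Module.finitePresentation_of_finite R p
  have hm : p.map (algebraMap R Rp) = maximalIdeal Rp :=
    Localization.AtPrime.map_eq_maximalIdeal
  have hm0 : maximalIdeal Rp ≠ ⊥ := fun h => hnf (isField_iff_maximalIdeal_eq.mpr h)
  obtain ⟨π, hπ⟩ := (hpir.principal (maximalIdeal Rp))
  have hπ' : maximalIdeal Rp = Ideal.span {π} := hπ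
  have hπ0 : π ≠ 0 := by
    rintro rfl
    exact hm0 (by rw [hπ']; exact Ideal.span_singleton_eq_bot.mpr rfl)
  have hne_top : maximalIdeal Rp ≠ ⊤ := (maximalIdeal.isMaximal Rp).ne_top
  -- the maximal ideal is not contained in its square
  have hm2 : ¬ maximalIdeal Rp ≤ maximalIdeal Rp ^ 2 := by
    intro h
    have hπm : π ∈ maximalIdeal Rp := by rw [hπ']; exact Ideal.mem_span_singleton_self π
    have := h hπm
    rw [hπ', sq, Ideal.span_singleton_mul_span_singleton, Ideal.mem_span_singleton'] at this
    obtain ⟨c, hc⟩ := this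
    have hzero : π * (c * π - 1) = 0 := by linear_combination hc
    rcases mul_eq_zero.mp hzero with h0 | h0
    · exact hπ0 h0
    · have hcu : c * π = 1 := by linear_combination h0
      apply hne_top
      rw [hπ', Ideal.span_singleton_eq_top]
      exact IsUnit.of_mul_eq_one (a := π) c (by rw [mul_comm]; exact hcu)
  -- find x ∈ p whose image is not in m²
  obtain ⟨x, hxp, hx2⟩ : ∃ x ∈ p, algebraMap R Rp x ∉ maximalIdeal Rp ^ 2 := by
    by_contra h
    push_neg at h
    apply hm2
    rw [← hm, Ideal.map_le_iff_le_comap]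
    intro y hy
    rw [Ideal.mem_comap, hm]
    exact h y hy
  have hxm : algebraMap R Rp x ∈ maximalIdeal Rp := by
    rw [← hm]; exact Ideal.mem_map_of_mem _ hxp
  -- divide by π: the image of x is g * π with g a unit
  have hxπ : algebraMap R Rp x ∈ Ideal.span {π} := by rwa [← hπ']
  obtain ⟨g, hg⟩ := Ideal.mem_span_singleton'.mp hxπ
  have hgu : IsUnit g := by
    by_contra hgu
    have hgm : g ∈ maximalIdeal Rp := hgu
    rw [hπ', Ideal.mem_span_singleton'] at hgm
    obtain ⟨d, hd⟩ := hgm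
    apply hx2
    rw [sq, hπ', Ideal.span_singleton_mul_span_singleton, Ideal.mem_span_singleton']
    exact ⟨d, by rw [← hg, ← hd]; ring⟩
  -- the "division by π" isomorphism G from p·Rp = (π) to Rp
  have hπL : π ∈ p.map (algebraMap R Rp) := by
    rw [hm, hπ']; exact Ideal.mem_span_singleton_self π
  let e : Rp →ₗ[Rp] ↥(p.map (algebraMap R Rp)) :=
    LinearMap.toSpanSingleton Rp _ (⟨π, hπL⟩ : ↥(p.map (algebraMap R Rp)))
  have hbij : Function.Bijective e := by
    constructor
    · intro z w hzw
      have h1 : z * π = w * π := congrArg Subtype.val hzw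
      exact mul_right_cancel₀ hπ0 h1
    · intro y
      have hy : (y : Rp) ∈ Ideal.span {π} := by rw [← hπ', ← hm]; exact y.2
      obtain ⟨c, hc⟩ := Ideal.mem_span_singleton'.mp hy
      refine ⟨c, Subtype.ext ?_⟩
      show c • π = (y : Rp)
      rw [smul_eq_mul, hc]
  let E := LinearEquiv.ofBijective e hbij
  let G : ↥(p.map (algebraMap R Rp)) →ₗ[Rp] Rp := E.symm
  obtain ⟨⟨f, s⟩, hfs⟩ := IsLocalizedModule.surj p.primeCompl
    (IsLocalizedModule.mapExtendScalars p.primeCompl (Algebra.idealMap Rp p)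
      (Algebra.linearMap R Rp) Rp) G
  refine ⟨f, ⟨x, hxp⟩, ?_⟩
  have hGx : G (Algebra.idealMap Rp p ⟨x, hxp⟩) = g := by
    show E.symm (Algebra.idealMap Rp p ⟨x, hxp⟩) = g
    rw [LinearEquiv.symm_apply_eq]
    refine Subtype.ext ?_
    show algebraMap R Rp x = g • π
    rw [smul_eq_mul, hg]
  have heval := LinearMap.congr_fun hfs (Algebra.idealMap Rp p ⟨x, hxp⟩)
  have hL : IsLocalizedModule.mapExtendScalars p.primeCompl (Algebra.idealMap Rp p)
      (Algebra.linearMap R Rp) Rp f (Algebra.idealMap Rp p ⟨x, hxp⟩)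
        = algebraMap R Rp (f ⟨x, hxp⟩) := by
    simp [IsLocalizedModule.mapExtendScalars]
  rw [hL] at heval
  have hsmul : (s • G) (Algebra.idealMap Rp p ⟨x, hxp⟩)
      = algebraMap R Rp s * g := by
    rw [LinearMap.smul_apply, hGx]
    show (↑s : R) • g = _
    rw [Algebra.smul_def]
  rw [hsmul] at heval
  have hu : IsUnit (algebraMap R Rp (f ⟨x, hxp⟩)) := by
    rw [← heval]
    exact (IsLocalization.map_units Rp s).mul hgu
  intro hmem
  have : algebraMap R Rp (f ⟨x, hxp⟩) ∈ maximalIdeal Rp := by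
    rw [← hm]; exact Ideal.mem_map_of_mem _ hmem
  exact this hu

/-- Satz 2.4: A prime ideal `p` is good, i.e. `γ_p(R) = p`, iff the localization `R_p` is
not a discrete valuation ring (a discrete valuation ring being a local principal ideal
domain which is not a field; `R_p` is always local). -/
theorem prime_good_iff_not_DVR
    {R : Type u} [CommRing R] [IsNoetherianRing R] [IsLocalRing R]
    (p : Ideal R) [p.IsPrime] :
    (⨆ f : p →ₗ[R] R, LinearMap.range f) = p ↔
      ¬ (IsDomain (Localization.AtPrime p) ∧
          IsPrincipalIdealRing (Localization.AtPrime p) ∧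
          ¬ IsField (Localization.AtPrime p)) := by
  constructor
  · rintro hgood ⟨hdom, hpir, hnf⟩
    obtain ⟨f, x, hfx⟩ := exists_hom_of_dvr p hdom hpir hnf
    apply hfx
    have hmem : f x ∈ ⨆ f : p →ₗ[R] R, LinearMap.range f :=
      le_iSup (fun f : p →ₗ[R] R => LinearMap.range f) f (LinearMap.mem_range_self f x)
    rwa [hgood] at hmem
  · intro hnd
    apply le_antisymm
    · refine iSup_le fun f => ?_
      rintro y ⟨x, rfl⟩
      by_contra hfx
      exact hnd (dvr_of_hom p f x hfx)
    · have h := Submodule.range_subtype p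
      calc p = LinearMap.range p.subtype := h.symm
      _ ≤ ⨆ f : p →ₗ[R] R, LinearMap.range f :=
        le_iSup (fun f : p →ₗ[R] R => LinearMap.range f) p.subtype
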